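/- arXiv:math/0205274 — 2 statements merged into one kernel-verified Lean document; each statement's English description precedes it below -/
import Mathlib

section
/- Let P(z) = 4(z-e_1)(z-e_2)(z-e_3) be a cubic polynomial with distinct roots e_1,e_2,e_3, let L be a nonnegative integer and let l, l' be integers with 0 ≤ l, l' ≤ L. Then the expression (P(z_j)/(z_j - z_k)) ∂/∂z_j + (P(z_k)/(z_k - z_j)) ∂/∂z_k applied to the symmetric monomial z_j^l z_k^{l'} + z_j^{l'} z_k^l equals 4L δ_{l,L} (z_j^{L+1} z_k^{l'} + z_j^{l'} z_k^{L+1}) + 4L δ_{l',L} (z_j^l z_k^{L+1} + z_j^{L+1} z_k^l) plus a polynomial which is a linear combination of monomials z_j^t z_k^{t'} with 0 ≤ t, t' ≤ L. -/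
open MvPolynomial

namespace Stmt0Aux

open Finset

noncomputable def S (n : ℕ) : MvPolynomial (Fin 2) ℂ :=
  ∑ i ∈ Finset.range n, X 0 ^ i * X 1 ^ (n - 1 - i)

noncomputable def D (p q : ℕ) : MvPolynomial (Fin 2) ℂ :=
  X 0 ^ q * X 1 ^ q * S (p - q) - X 0 ^ p * X 1 ^ p * S (q - p)

lemma S_mul (n : ℕ) :
    (X 0 - X 1 : MvPolynomial (Fin 2) ℂ) * S n = X 0 ^ n - X 1 ^ n := by
  rw [S, mul_comm]; exact geom_sum₂_mul _ _ n

lemma S_zero : S 0 = 0 := by simp [S]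

lemma D_mul (p q : ℕ) :
    (X 0 - X 1 : MvPolynomial (Fin 2) ℂ) * D p q
      = X 0 ^ p * X 1 ^ q - X 0 ^ q * X 1 ^ p := by
  rcases le_total q p with h | h
  · obtain ⟨k, rfl⟩ := Nat.exists_eq_add_of_le h
    have h1 : q + k - q = k := by omega
    have h2 : q - (q + k) = 0 := by omega
    rw [D, h1, h2, S_zero]
    have := S_mul k
    rw [pow_add, pow_add]
    linear_combination (X 0 ^ q * X 1 ^ q) * this
  · obtain ⟨k, rfl⟩ := Nat.exists_eq_add_of_le h
    have h1 : p + k - p = k := by omega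
    have h2 : p - (p + k) = 0 := by omega
    rw [D, h1, h2, S_zero]
    have := S_mul k
    rw [pow_add, pow_add]
    linear_combination (-(X 0 ^ p * X 1 ^ p)) * this

lemma X_sub_ne : (X 0 - X 1 : MvPolynomial (Fin 2) ℂ) ≠ 0 := by
  intro h
  have := congrArg (eval (fun i : Fin 2 => if i = 0 then (1:ℂ) else 0)) h
  simp at this

lemma D_split (L b : ℕ) :
    D (L + 2) b = X 0 ^ (L + 1) * X 1 ^ b + X 0 ^ b * X 1 ^ (L + 1) + D (L + 1) (b + 1) := by
  apply mul_left_cancel₀ X_sub_ne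
  have h1 := D_mul (L + 2) b
  have h2 := D_mul (L + 1) (b + 1)
  linear_combination h1 - h2

lemma comb_mem {N : Submodule ℂ (MvPolynomial (Fin 2) ℂ)} {p : MvPolynomial (Fin 2) ℂ}
    (c : ℂ) (hp : p ∈ N) : C c * p ∈ N := by
  rw [← smul_eq_C_mul]; exact N.smul_mem c hp

lemma D_mem (L p q : ℕ) (hp : p ≤ L + 1) (hq : q ≤ L + 1) :
    D p q ∈ Submodule.span ℂ
      {q : MvPolynomial (Fin 2) ℂ | ∃ t t' : ℕ, t ≤ L ∧ t' ≤ L ∧ q = X 0 ^ t * X 1 ^ t'} := by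
  have key : ∀ a b : ℕ, a ≤ L + 1 → b ≤ L + 1 →
      (X 0 ^ b * X 1 ^ b * S (a - b) : MvPolynomial (Fin 2) ℂ) ∈ Submodule.span ℂ
        {q : MvPolynomial (Fin 2) ℂ | ∃ t t' : ℕ, t ≤ L ∧ t' ≤ L ∧ q = X 0 ^ t * X 1 ^ t'} := by
    intro a b ha hb
    rw [S, Finset.mul_sum]
    apply Submodule.sum_mem
    intro i hi
    simp only [Finset.mem_range] at hi
    have h : (X 0 ^ b * X 1 ^ b * (X 0 ^ i * X 1 ^ (a - b - 1 - i)) : MvPolynomial (Fin 2) ℂ)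
        = X 0 ^ (b + i) * X 1 ^ (b + (a - b - 1 - i)) := by
      rw [pow_add, pow_add]; ring
    rw [h]
    exact Submodule.subset_span ⟨b + i, b + (a - b - 1 - i), by omega, by omega, rfl⟩
  exact Submodule.sub_mem _ (key p q hp hq) (key q p hq hp)

noncomputable def E (e₁ e₂ e₃ : ℂ) (a b : ℕ) : MvPolynomial (Fin 2) ℂ :=
  C (4 * (a : ℂ)) *
    (D (a + 2) b - (C e₁ + C e₂ + C e₃) * D (a + 1) b
      + (C e₁ * C e₂ + C e₁ * C e₃ + C e₂ * C e₃) * D a b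
      - C e₁ * C e₂ * C e₃ * D (a - 1) b)

lemma key (e₁ e₂ e₃ : ℂ) (a b : ℕ) :
    (4 * (X 0 - C e₁) * (X 0 - C e₂) * (X 0 - C e₃)) * pderiv 0 (X 0 ^ a * X 1 ^ b)
      - (4 * (X 1 - C e₁) * (X 1 - C e₂) * (X 1 - C e₃)) * pderiv 1 (X 0 ^ b * X 1 ^ a)
    = (X 0 - X 1) * E e₁ e₂ e₃ a b := by
  cases a with
  | zero =>
    simp [E]
  | succ m =>
    have h0 : pderiv 0 (X 0 ^ (m + 1) * X 1 ^ b : MvPolynomial (Fin 2) ℂ)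
        = C ((m : ℂ) + 1) * (X 0 ^ m * X 1 ^ b) := by
      simp [pderiv_mul, pderiv_pow]; push_cast; ring
    have h1 : pderiv 1 (X 0 ^ b * X 1 ^ (m + 1) : MvPolynomial (Fin 2) ℂ)
        = C ((m : ℂ) + 1) * (X 0 ^ b * X 1 ^ m) := by
      simp [pderiv_mul, pderiv_pow]; push_cast; ring
    rw [h0, h1]
    simp only [E, Nat.add_sub_cancel]
    rw [show ((m + 1 : ℕ) : ℂ) = (m : ℂ) + 1 from by push_cast; ring]
    rw [show (C (4 * ((m : ℂ) + 1)) : MvPolynomial (Fin 2) ℂ) = 4 * C ((m : ℂ) + 1) from by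
      rw [map_mul, map_ofNat]]
    linear_combination (-(4 * C ((m : ℂ) + 1)) : MvPolynomial (Fin 2) ℂ) *
      (D_mul (m + 1 + 2) b - (C e₁ + C e₂ + C e₃) * D_mul (m + 1 + 1) b
        + (C e₁ * C e₂ + C e₁ * C e₃ + C e₂ * C e₃) * D_mul (m + 1) b
        - C e₁ * C e₂ * C e₃ * D_mul m b)

lemma E_mem (e₁ e₂ e₃ : ℂ) (L a b : ℕ) (ha : a ≤ L) (hb : b ≤ L) :
    E e₁ e₂ e₃ a b
      - C (if a = L then (4 * L : ℂ) else 0) * (X 0 ^ (L + 1) * X 1 ^ b + X 0 ^ b * X 1 ^ (L + 1))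
      ∈ Submodule.span ℂ
        {q : MvPolynomial (Fin 2) ℂ | ∃ t t' : ℕ, t ≤ L ∧ t' ≤ L ∧ q = X 0 ^ t * X 1 ^ t'} := by
  rcases eq_or_lt_of_le ha with rfl | hlt
  · rw [if_pos rfl, E, D_split a b]
    have goal_eq : C (4 * (a : ℂ)) *
        (X 0 ^ (a + 1) * X 1 ^ b + X 0 ^ b * X 1 ^ (a + 1) + D (a + 1) (b + 1)
          - (C e₁ + C e₂ + C e₃) * D (a + 1) b
          + (C e₁ * C e₂ + C e₁ * C e₃ + C e₂ * C e₃) * D a b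
          - C e₁ * C e₂ * C e₃ * D (a - 1) b)
        - C (4 * (a : ℂ)) * (X 0 ^ (a + 1) * X 1 ^ b + X 0 ^ b * X 1 ^ (a + 1))
        = C (4 * (a : ℂ)) *
          (D (a + 1) (b + 1) - C (e₁ + e₂ + e₃) * D (a + 1) b
            + C (e₁ * e₂ + e₁ * e₃ + e₂ * e₃) * D a b
            - C (e₁ * e₂ * e₃) * D (a - 1) b) := by
      simp only [map_add, map_mul]; ring
    rw [goal_eq]
    apply comb_mem
    apply Submodule.sub_mem
    apply Submodule.add_mem
    apply Submodule.sub_mem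
    · exact D_mem _ (a + 1) (b + 1) (by omega) (by omega)
    · exact comb_mem _ (D_mem _ (a + 1) b (by omega) (by omega))
    · exact comb_mem _ (D_mem _ a b (by omega) (by omega))
    · exact comb_mem _ (D_mem _ (a - 1) b (by omega) (by omega))
  · rw [if_neg (by omega), map_zero, zero_mul, sub_zero, E]
    have goal_eq : (D (a + 2) b - (C e₁ + C e₂ + C e₃) * D (a + 1) b
          + (C e₁ * C e₂ + C e₁ * C e₃ + C e₂ * C e₃) * D a b
          - C e₁ * C e₂ * C e₃ * D (a - 1) b : MvPolynomial (Fin 2) ℂ)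
        = D (a + 2) b - C (e₁ + e₂ + e₃) * D (a + 1) b
            + C (e₁ * e₂ + e₁ * e₃ + e₂ * e₃) * D a b
            - C (e₁ * e₂ * e₃) * D (a - 1) b := by
      simp only [map_add, map_mul]
    rw [goal_eq]
    apply comb_mem
    apply Submodule.sub_mem
    apply Submodule.add_mem
    apply Submodule.sub_mem
    · exact D_mem _ (a + 2) b (by omega) (by omega)
    · exact comb_mem _ (D_mem _ (a + 1) b (by omega) (by omega))
    · exact comb_mem _ (D_mem _ a b (by omega) (by omega))
    · exact comb_mem _ (D_mem _ (a - 1) b (by omega) (by omega))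

end Stmt0Aux

open Stmt0Aux

theorem stmt_0 (e₁ e₂ e₃ : ℂ) (h12 : e₁ ≠ e₂) (h13 : e₁ ≠ e₃) (h23 : e₂ ≠ e₃)
    (L l l' : ℕ) (hl : l ≤ L) (hl' : l' ≤ L) :
    ∃ r ∈ Submodule.span ℂ
      {q : MvPolynomial (Fin 2) ℂ | ∃ t t' : ℕ, t ≤ L ∧ t' ≤ L ∧ q = X 0 ^ t * X 1 ^ t'},
    (4 * (X 0 - C e₁) * (X 0 - C e₂) * (X 0 - C e₃)) *
        pderiv 0 (X 0 ^ l * X 1 ^ l' + X 0 ^ l' * X 1 ^ l)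
      - (4 * (X 1 - C e₁) * (X 1 - C e₂) * (X 1 - C e₃)) *
        pderiv 1 (X 0 ^ l * X 1 ^ l' + X 0 ^ l' * X 1 ^ l)
    = (X 0 - X 1) *
        ((if l = L then (4 * L : ℂ) else 0) • (X 0 ^ (L + 1) * X 1 ^ l' + X 0 ^ l' * X 1 ^ (L + 1))
          + (if l' = L then (4 * L : ℂ) else 0) • (X 0 ^ l * X 1 ^ (L + 1) + X 0 ^ (L + 1) * X 1 ^ l)
          + r) := by
  set c1 : ℂ := if l = L then (4 * L : ℂ) else 0 with hc1
  set c2 : ℂ := if l' = L then (4 * L : ℂ) else 0 with hc2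
  refine ⟨E e₁ e₂ e₃ l l' + E e₁ e₂ e₃ l' l
      - C c1 * (X 0 ^ (L + 1) * X 1 ^ l' + X 0 ^ l' * X 1 ^ (L + 1))
      - C c2 * (X 0 ^ l * X 1 ^ (L + 1) + X 0 ^ (L + 1) * X 1 ^ l), ?_, ?_⟩
  · have h1 := E_mem e₁ e₂ e₃ L l l' hl hl'
    have h2 := E_mem e₁ e₂ e₃ L l' l hl' hl
    rw [← hc1] at h1
    rw [← hc2] at h2
    have heq : E e₁ e₂ e₃ l l' + E e₁ e₂ e₃ l' l
        - C c1 * (X 0 ^ (L + 1) * X 1 ^ l' + X 0 ^ l' * X 1 ^ (L + 1))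
        - C c2 * (X 0 ^ l * X 1 ^ (L + 1) + X 0 ^ (L + 1) * X 1 ^ l)
        = (E e₁ e₂ e₃ l l' - C c1 * (X 0 ^ (L + 1) * X 1 ^ l' + X 0 ^ l' * X 1 ^ (L + 1)))
          + (E e₁ e₂ e₃ l' l - C c2 * (X 0 ^ (L + 1) * X 1 ^ l + X 0 ^ l * X 1 ^ (L + 1))) := by
      ring
    rw [heq]
    exact Submodule.add_mem _ h1 h2
  · have k1 := key e₁ e₂ e₃ l l'
    have k2 := key e₁ e₂ e₃ l' l
    simp only [map_add]
    rw [smul_eq_C_mul, smul_eq_C_mul]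
    linear_combination k1 + k2
end

section
/- Let Ĥ and P̂ be commuting linear operators on the space of polynomials in one variable z, and suppose there is a constant c ∉ ℤ and a nonnegative integer d such that for every polynomial f of degree exactly d + p' with p' ≠ 0 and p' ≠ c, the degree of Ĥ f exceeds the degree of f by exactly one, while Ĥ maps polynomials of degree ≤ d to polynomials of degree ≤ d. Then P̂ also maps the space of polynomials of degree ≤ d into itself, provided P̂ maps that space into polynomials. -/
open Polynomial

theorem stmt_3 (c : ℂ) (hc : ∀ n : ℤ, c ≠ (n : ℂ)) (d : ℕ)
    (H P : Polynomial ℂ →ₗ[ℂ] Polynomial ℂ)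
    (hraise : ∀ (g : Polynomial ℂ) (p' : ℕ), p' ≠ 0 → (p' : ℂ) ≠ c →
      g.degree = ((d + p' : ℕ) : WithBot ℕ) → (H g).degree = ((d + p' + 1 : ℕ) : WithBot ℕ))
    (hinv : ∀ g : Polynomial ℂ, g.degree ≤ (d : ℕ) → (H g).degree ≤ (d : ℕ))
    (hcomm : H ∘ₗ P = P ∘ₗ H) :
    ∀ g : Polynomial ℂ, g.degree ≤ (d : ℕ) → (P g).degree ≤ (d : ℕ) := by
  set N := (Finset.range (d+1)).sup (fun i => (P ((X:ℂ[X])^i)).natDegree) with hN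
  have hbound : ∀ f : ℂ[X], f.degree ≤ (d:ℕ) → (P f).natDegree ≤ N := by
    intro f hf
    have hdeg : f.natDegree < d + 1 := Nat.lt_succ_of_le (natDegree_le_iff_degree_le.2 hf)
    have hf' : f = ∑ i ∈ Finset.range (d+1), f.coeff i • (X:ℂ[X])^i := by
      conv_lhs => rw [f.as_sum_range' (d+1) hdeg]
      refine Finset.sum_congr rfl fun i _ => ?_
      rw [smul_X_eq_monomial]
    rw [hf', map_sum]
    refine natDegree_sum_le_of_forall_le _ _ fun i hi => ?_
    rw [map_smul]
    exact (natDegree_smul_le _ _).trans (hN ▸ Finset.le_sup (f := fun i => (P ((X:ℂ[X])^i)).natDegree) hi)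
  intro g hg
  by_contra hcon
  have hgt : ¬ (P g).natDegree ≤ d := fun h => hcon (natDegree_le_iff_degree_le.1 h)
  set T : Set ℕ := {n | d < n ∧ ∃ f : ℂ[X], f.degree ≤ (d:ℕ) ∧ (P f).degree = (n : WithBot ℕ)}
    with hT
  have hPg0 : P g ≠ 0 := by
    intro h0
    exact hgt (by simp [h0])
  have hT0 : (P g).natDegree ∈ T := ⟨lt_of_not_ge hgt, g, hg, degree_eq_natDegree hPg0⟩
  have hTbdd : BddAbove T := by
    refine ⟨N, fun n hn => ?_⟩
    obtain ⟨_, f, hf, hfn⟩ := hn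
    have hnn : (P f).natDegree = n := natDegree_eq_of_degree_eq_some hfn
    exact hnn ▸ hbound f hf
  have hmem : sSup T ∈ T := Nat.sSup_mem ⟨_, hT0⟩ hTbdd
  set m := sSup T with hm
  obtain ⟨hdm, f, hf, hfm⟩ := hmem
  have hp' : m = d + (m - d) := by omega
  have hne : (m - d) ≠ 0 := by omega
  have hcne : ((m - d : ℕ) : ℂ) ≠ c := by
    intro h
    exact hc ((m - d : ℕ) : ℤ) (by exact_mod_cast h.symm)
  have hH : (H (P f)).degree = ((d + (m - d) + 1 : ℕ) : WithBot ℕ) :=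
    hraise (P f) (m - d) hne hcne (by rw [hfm, ← hp'])
  have hPH : P (H f) = H (P f) := by
    have := LinearMap.congr_fun hcomm f
    simpa using this.symm
  have hmem' : m + 1 ∈ T := by
    refine ⟨by omega, H f, hinv f hf, ?_⟩
    rw [hPH, hH]
    congr 1
    omega
  have := le_csSup hTbdd hmem'
  omega
end
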